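/- Let α : ℕ → ℝ with α n > 0 for all n ≥ 1, and let g : ℕ → ℕ → ℂ satisfy: (i) g n m = conj (g m n) for all n, m; (ii) for all n and all m ≥ 1, (α (n+1)) · g (n+1) m = m · g n (m−1); (iii) g (n+1) 0 = 0 for all n. Then g n m = 0 whenever n ≠ m, and for every n, g n n = (n! / (α 1 · α 2 ⋯ α n)) · g 0 0 (with the empty product equal to 1 for n = 0). -/

import Mathlib

open ComplexConjugate Complex Finset

theorem diagonal_operator_monomial_inner (α : ℕ → ℝ) (hα : ∀ n : ℕ, 1 ≤ n → 0 < α n)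
    (g : ℕ → ℕ → ℂ)
    (hSym : ∀ n m : ℕ, g n m = conj (g m n))
    (hRec : ∀ n m : ℕ, 1 ≤ m →
      ((α (n + 1) : ℂ)) * g (n + 1) m = (m : ℂ) * g n (m - 1))
    (hZero : ∀ n : ℕ, g (n + 1) 0 = 0) :
    (∀ n m : ℕ, n ≠ m → g n m = 0) ∧
      (∀ n : ℕ, g n n
        = ((n.factorial : ℂ) / ∏ j ∈ Finset.range n, ((α (j + 1) : ℝ) : ℂ)) * g 0 0) := by
  have hαne : ∀ n : ℕ, ((α (n + 1) : ℂ)) ≠ 0 := by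
    intro n
    exact_mod_cast (hα (n + 1) (Nat.le_add_left 1 n)).ne'
  have hoff : ∀ n m : ℕ, n ≠ m → g n m = 0 := by
    intro n
    induction n with
    | zero =>
      intro m hm
      obtain ⟨k, rfl⟩ := Nat.exists_eq_succ_of_ne_zero (Ne.symm hm)
      rw [hSym, hZero, map_zero]
    | succ n ih =>
      intro m hm
      rcases Nat.eq_zero_or_pos m with h0 | h1
      · subst h0; exact hZero n
      · have := hRec n m h1
        have hne : n ≠ m - 1 := by omega
        rw [ih (m - 1) hne, mul_zero] at this
        exact (mul_eq_zero.mp this).resolve_left (hαne n)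
  refine ⟨hoff, ?_⟩
  intro n
  induction n with
  | zero => simp
  | succ n ih =>
    have h := hRec n (n + 1) (Nat.le_add_left 1 n)
    simp only [Nat.add_sub_cancel] at h
    have : g (n + 1) (n + 1) = ((n + 1 : ℕ) : ℂ) / (α (n + 1) : ℂ) * g n n := by
      rw [div_mul_eq_mul_div, eq_div_iff (hαne n)]
      push_cast at h ⊢
      linear_combination h
    rw [this, ih, Finset.prod_range_succ, Nat.factorial_succ]
    have hne : (∏ j ∈ Finset.range n, ((α (j + 1) : ℝ) : ℂ)) ≠ 0 :=
      Finset.prod_ne_zero_iff.mpr fun j _ => hαne j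
    field_simp
    push_cast
    ring
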